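/- For an n-bit string v : Fin n → Bool, let val(v) = ∑_{i < n} (if v i then 2^(n−1−i) else 0) denote its numeric value with the most significant bit first. Then for all strings x, α : Fin n → Bool, the number of indices i such that x j = α j for all j < i, x i = false, and α i = true equals 1 if val(x) < val(α) and equals 0 otherwise. Hence the sum of the comparison-test leaf labels equals the 0/1 indicator of val(x) < val(α). -/

import Mathlib

open Finset

private lemma sum_two_pow_lt (m : ℕ) : (∑ k ∈ Finset.range m, 2 ^ k) < 2 ^ m := by
  induction m with
  | zero => simp
  | succ m ih =>
    rw [Finset.sum_range_succ, pow_succ]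
    omega

private lemma val_lt_of_witness {n : ℕ} (x α : Fin n → Bool) (i : Fin n)
    (hpre : ∀ j : Fin n, j < i → x j = α j) (hx : x i = false) (hα : α i = true) :
    (∑ j : Fin n, if x j then 2 ^ (n - 1 - (j : ℕ)) else 0)
      < (∑ j : Fin n, if α j then 2 ^ (n - 1 - (j : ℕ)) else 0) := by
  classical
  have hsplit : ∀ v : Fin n → Bool,
      (∑ j : Fin n, if v j then 2 ^ (n - 1 - (j : ℕ)) else 0)
        = (∑ j ∈ univ.filter (· < i), if v j then 2 ^ (n - 1 - (j : ℕ)) else 0)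
          + (∑ j ∈ univ.filter (fun j => ¬ j < i), if v j then 2 ^ (n - 1 - (j : ℕ)) else 0) :=
    fun v => (Finset.sum_filter_add_sum_filter_not _ _ _).symm
  rw [hsplit x, hsplit α]
  have hpreeq :
      (∑ j ∈ univ.filter (· < i), if x j then 2 ^ (n - 1 - (j : ℕ)) else 0)
        = (∑ j ∈ univ.filter (· < i), if α j then 2 ^ (n - 1 - (j : ℕ)) else 0) := by
    refine Finset.sum_congr rfl fun j hj => ?_
    rw [hpre j (by simpa using hj)]
  rw [hpreeq]
  refine Nat.add_lt_add_left ?_ _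
  have hset : univ.filter (fun j : Fin n => ¬ j < i) = insert i (univ.filter (fun j => i < j)) := by
    ext j
    simp only [Finset.mem_filter, Finset.mem_univ, true_and, Finset.mem_insert, not_lt,
      le_iff_lt_or_eq]
    tauto
  rw [hset, Finset.sum_insert (by simp), Finset.sum_insert (by simp), hx, hα]
  simp only [Bool.false_eq_true, if_false, if_true, zero_add]
  have htail : (∑ j ∈ univ.filter (fun j : Fin n => i < j),
      if x j then 2 ^ (n - 1 - (j : ℕ)) else 0) < 2 ^ (n - 1 - (i : ℕ)) := by
    have h1 : (∑ j ∈ univ.filter (fun j : Fin n => i < j),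
        if x j then 2 ^ (n - 1 - (j : ℕ)) else 0)
        ≤ ∑ j ∈ univ.filter (fun j : Fin n => i < j), 2 ^ (n - 1 - (j : ℕ)) := by
      refine Finset.sum_le_sum fun j _ => ?_
      split <;> simp
    have h2 : (∑ j ∈ univ.filter (fun j : Fin n => i < j), 2 ^ (n - 1 - (j : ℕ)))
        = ∑ k ∈ (univ.filter (fun j : Fin n => i < j)).image
            (fun j : Fin n => n - 1 - (j : ℕ)), 2 ^ k := by
      rw [Finset.sum_image]
      intro a ha b hb hab
      have ha' : (a : ℕ) < n := a.isLt
      have hb' : (b : ℕ) < n := b.isLt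
      have hab' : n - 1 - (a : ℕ) = n - 1 - (b : ℕ) := hab
      exact Fin.ext (by omega)
    have h3 : (univ.filter (fun j : Fin n => i < j)).image (fun j : Fin n => n - 1 - (j : ℕ))
        ⊆ Finset.range (n - 1 - (i : ℕ)) := by
      intro k hk
      simp only [Finset.mem_image, Finset.mem_filter, Finset.mem_univ, true_and] at hk
      obtain ⟨j, hij, rfl⟩ := hk
      have hij' : (i : ℕ) < (j : ℕ) := hij
      have := j.isLt
      simp only [Finset.mem_range]
      omega
    calc (∑ j ∈ univ.filter (fun j : Fin n => i < j),
            if x j then 2 ^ (n - 1 - (j : ℕ)) else 0)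
        ≤ ∑ k ∈ (univ.filter (fun j : Fin n => i < j)).image
            (fun j : Fin n => n - 1 - (j : ℕ)), 2 ^ k := by rw [← h2]; exact h1
      _ ≤ ∑ k ∈ Finset.range (n - 1 - (i : ℕ)), 2 ^ k :=
          Finset.sum_le_sum_of_subset h3
      _ < 2 ^ (n - 1 - (i : ℕ)) := sum_two_pow_lt _
  omega

private lemma exists_witness_of_ne {n : ℕ} (x α : Fin n → Bool) (hne : x ≠ α) :
    (∃ i : Fin n, (∀ j : Fin n, j < i → x j = α j) ∧ x i = false ∧ α i = true)
    ∨ (∃ i : Fin n, (∀ j : Fin n, j < i → α j = x j) ∧ α i = false ∧ x i = true) := by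
  classical
  have hs : (univ.filter (fun j : Fin n => x j ≠ α j)).Nonempty := by
    rw [Finset.filter_nonempty_iff]
    by_contra h
    push_neg at h
    exact hne (funext fun j => h j (Finset.mem_univ j))
  set i := (univ.filter (fun j : Fin n => x j ≠ α j)).min' hs with hi
  have hmem : x i ≠ α i := by
    have := Finset.min'_mem _ hs
    simpa using this
  have hpre : ∀ j : Fin n, j < i → x j = α j := by
    intro j hj
    by_contra hj'
    have : i ≤ j := Finset.min'_le _ _ (by simpa using hj')
    exact absurd hj (not_lt.mpr this)
  cases hxv : x i <;> cases hαv : α i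
  · exact absurd (hxv.trans hαv.symm) hmem
  · exact Or.inl ⟨i, hpre, hxv, hαv⟩
  · exact Or.inr ⟨i, fun j hj => (hpre j hj).symm, hαv, hxv⟩
  · exact absurd (hxv.trans hαv.symm) hmem

/-- With `val v = ∑ i, if v i then 2^(n-1-i) else 0` (most significant bit first),
the number of indices `i` such that all bits before `i` agree, `x i = false` and
`α i = true` equals `1` if `val x < val α` and `0` otherwise: the sum of the
comparison-test leaf labels is the indicator of `val x < val α`. -/
theorem leaf_label_count_eq_indicator {n : ℕ} (x α : Fin n → Bool) :
    (Finset.univ.filter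
        (fun i : Fin n => (∀ j : Fin n, j < i → x j = α j) ∧ x i = false ∧ α i = true)).card
      = if (∑ i : Fin n, if x i then 2 ^ (n - 1 - (i : ℕ)) else 0)
            < (∑ i : Fin n, if α i then 2 ^ (n - 1 - (i : ℕ)) else 0)
        then 1 else 0 := by
  classical
  by_cases hP : ∃ i : Fin n, (∀ j : Fin n, j < i → x j = α j) ∧ x i = false ∧ α i = true
  · obtain ⟨i, hi⟩ := hP
    have hset : Finset.univ.filter
        (fun i : Fin n => (∀ j : Fin n, j < i → x j = α j) ∧ x i = false ∧ α i = true) = {i} := by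
      ext j
      simp only [Finset.mem_filter, Finset.mem_univ, true_and, Finset.mem_singleton]
      constructor
      · rintro ⟨hj1, hj2, hj3⟩
        rcases lt_trichotomy j i with h | h | h
        · have := hi.1 j h
          rw [hj2, hj3] at this; exact absurd this (by simp)
        · exact h
        · have := hj1 i h
          rw [hi.2.1, hi.2.2] at this; exact absurd this (by simp)
      · rintro rfl; exact hi
    rw [hset, Finset.card_singleton,
      if_pos (val_lt_of_witness x α i hi.1 hi.2.1 hi.2.2)]
  · have hset : Finset.univ.filter
        (fun i : Fin n => (∀ j : Fin n, j < i → x j = α j) ∧ x i = false ∧ α i = true) = ∅ := by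
      rw [Finset.filter_eq_empty_iff]
      intro i _ hi
      exact hP ⟨i, hi⟩
    rw [hset, Finset.card_empty]
    rcases eq_or_ne x α with rfl | hne
    · simp
    · rcases exists_witness_of_ne x α hne with h | h
      · exact absurd h hP
      · obtain ⟨i, hi⟩ := h
        have := val_lt_of_witness α x i hi.1 hi.2.1 hi.2.2
        rw [if_neg (by omega)]
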